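/- Let X be a locally finite preordered set, R a ring, and m : X → X → R a multiplicative function, i.e. m x y = 0 unless x ≤ y; for every x ≤ y, m x y is an invertible central element of R; and m x y = m x z · m z y whenever x ≤ z ≤ y. Then the Hadamard (pointwise) multiplication map ψ_m : f ↦ (fun x y => m x y · f x y) is a ring automorphism of I(X,R). -/

import Mathlib

/-- For a multiplicative function `m` on a locally finite preordered set,
Hadamard (pointwise) multiplication by `m` is a ring automorphism of the incidence
algebra. -/
theorem hadamard_mult_function_is_ring_aut {X R : Type*} [Preorder X]
    [LocallyFiniteOrder X] [DecidableEq X] [Ring R]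
    (m : X → X → R)
    (hm0 : ∀ x y : X, ¬x ≤ y → m x y = 0)
    (hm1 : ∀ x y : X, x ≤ y → m x y ∈ Set.center R ∧ IsUnit (m x y))
    (hm2 : ∀ x z y : X, x ≤ z → z ≤ y → m x y = m x z * m z y) :
    ∃ ψ : RingAut (IncidenceAlgebra R X),
      ∀ (f : IncidenceAlgebra R X) (x y : X), (ψ f) x y = m x y * f x y := by
  classical
  -- the pointwise inverse of `m`
  set m' : X → X → R := fun x y =>
    if h : x ≤ y then (((hm1 x y h).2.unit)⁻¹ : Rˣ) else 0 with hm'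
  have hinv_left : ∀ x y : X, x ≤ y → m' x y * m x y = 1 := by
    intro x y h
    simp only [hm', dif_pos h]
    exact (hm1 x y h).2.val_inv_mul
  have hinv_right : ∀ x y : X, x ≤ y → m x y * m' x y = 1 := by
    intro x y h
    simp only [hm', dif_pos h]
    exact (hm1 x y h).2.mul_val_inv
  -- forward and backward maps
  let F : IncidenceAlgebra R X → IncidenceAlgebra R X := fun f =>
    ⟨fun x y => m x y * f x y, fun x y h => by
      rw [hm0 x y h, zero_mul]⟩
  let G : IncidenceAlgebra R X → IncidenceAlgebra R X := fun f =>
    ⟨fun x y => m' x y * f x y, fun x y h => by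
      rw [IncidenceAlgebra.apply_eq_zero_of_not_le h, mul_zero]⟩
  have hF : ∀ (f : IncidenceAlgebra R X) (x y : X), F f x y = m x y * f x y := fun _ _ _ => rfl
  have hG : ∀ (f : IncidenceAlgebra R X) (x y : X), G f x y = m' x y * f x y := fun _ _ _ => rfl
  refine ⟨{ toFun := F, invFun := G, left_inv := ?_, right_inv := ?_,
            map_mul' := ?_, map_add' := ?_ }, fun f x y => rfl⟩
  · intro f
    ext x y h
    rw [hG, hF, ← mul_assoc, hinv_left x y h, one_mul]
  · intro f
    ext x y h
    rw [hF, hG, ← mul_assoc, hinv_right x y h, one_mul]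
  · intro f g
    ext x y h
    rw [hF, IncidenceAlgebra.mul_apply, IncidenceAlgebra.mul_apply, Finset.mul_sum]
    refine Finset.sum_congr rfl fun z hz => ?_
    rw [Finset.mem_Icc] at hz
    rw [hF, hF, hm2 x z y hz.1 hz.2]
    have hc : m z y * f x z = f x z * m z y :=
      (Set.mem_center_iff.mp (hm1 z y hz.2).1).comm (f x z)
    calc m x z * m z y * (f x z * g z y)
        = m x z * (m z y * f x z * g z y) := by rw [mul_assoc, mul_assoc]
      _ = m x z * (f x z * m z y * g z y) := by rw [hc]
      _ = m x z * f x z * (m z y * g z y) := by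
          rw [mul_assoc (f x z), ← mul_assoc (m x z)]
  · intro f g
    ext x y h
    rw [hF, IncidenceAlgebra.add_apply, IncidenceAlgebra.add_apply, hF, hF, mul_add]
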